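/- Let v_1, v_2 and ε be vectors in a real inner product space with ⟨ε, v_1⟩ = 0 and ⟨ε, v_2⟩ = 0, and set x = v_1 + v_2 + ε. If ‖v_2‖ < ‖v_1‖ (class 1 dominates the representation), then ‖x − v_1‖ < ‖x − v_2‖; hence in the two-class case, class dominance alone guarantees that the sparse representation classifier assigns x the correct label. -/
import Mathlib


open RealInnerProductSpace

/-- in the two-class case, class dominance alone guarantees
correct classification by SRC. -/
theorem src_two_class_dominance_sufficient
    {E : Type*} [NormedAddCommGroup E] [InnerProductSpace ℝ E]
    (v₁ v₂ ε : E) (h₁ : ⟪ε, v₁⟫ = 0) (h₂ : ⟪ε, v₂⟫ = 0)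
    (x : E) (hx : x = v₁ + v₂ + ε)
    (hdom : ‖v₂‖ < ‖v₁‖) :
    ‖x - v₁‖ < ‖x - v₂‖ := by
  have e1 : x - v₁ = v₂ + ε := by rw [hx]; abel
  have e2 : x - v₂ = v₁ + ε := by rw [hx]; abel
  have p1 : ‖v₂ + ε‖ ^ 2 = ‖v₂‖ ^ 2 + ‖ε‖ ^ 2 := by
    rw [norm_add_sq_real, real_inner_comm, h₂]; ring
  have p2 : ‖v₁ + ε‖ ^ 2 = ‖v₁‖ ^ 2 + ‖ε‖ ^ 2 := by
    rw [norm_add_sq_real, real_inner_comm, h₁]; ring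
  rw [e1, e2]
  have : ‖v₂ + ε‖ ^ 2 < ‖v₁ + ε‖ ^ 2 := by
    rw [p1, p2]
    have := norm_nonneg v₂
    nlinarith
  exact lt_of_pow_lt_pow_left₀ 2 (norm_nonneg _) this
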